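/- Let S be a set of points in general position in the plane, and let a, b ∈ S be two vertices of the boundary of the convex hull of S such that one of the two open halfplanes bounded by the line through a and b contains exactly 2 points of S and the other open halfplane contains at least 1 point of S. Then there do not exist two plane Hamiltonian paths π1, π2 on S such that the set of edges shared by π1 and π2 is exactly the segment ab. -/

import Mathlib

open Set
open scoped Classical

noncomputable section

/-- Points in the plane. -/
abbrev Pt : Type := ℝ × ℝ

/-- Orientation determinant of the triple `(a, b, p)`:
positive iff `p` lies strictly to the left of the directed line from `a` to `b`. -/
def det3 (a b p : Pt) : ℝ :=
  (b.1 - a.1) * (p.2 - a.2) - (b.2 - a.2) * (p.1 - a.1)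

/-- A finite point set is in general position if no three of its points are collinear. -/
def GenPos (S : Finset Pt) : Prop :=
  ∀ p ∈ S, ∀ q ∈ S, ∀ r ∈ S,
    p ≠ q → p ≠ r → q ≠ r → ¬ Collinear ℝ ({p, q, r} : Set Pt)

/-- The list of (directed) edges of a polygonal path given by its list of vertices. -/
def edgeList (l : List Pt) : List (Pt × Pt) := l.zip l.tail

/-- The segment `ab` is an edge of the path `l`, i.e. `a` and `b` are consecutive on `l`. -/
def IsEdgeOf (a b : Pt) (l : List Pt) : Prop :=
  (a, b) ∈ edgeList l ∨ (b, a) ∈ edgeList l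

/-- `l` is a plane (crossing-free) Hamiltonian path on the point set `S`:
its vertices are exactly the points of `S`, each visited once, and any two distinct
edges intersect only in common endpoints. -/
def PlanePath (S : Finset Pt) (l : List Pt) : Prop :=
  l.Nodup ∧ l.toFinset = S ∧
  ∀ e ∈ edgeList l, ∀ f ∈ edgeList l, e ≠ f →
    segment ℝ e.1 e.2 ∩ segment ℝ f.1 f.2 ⊆
      (({e.1, e.2} : Set Pt) ∩ ({f.1, f.2} : Set Pt))

/-- Two paths are edge-disjoint: no segment is an edge of both. -/
def EdgeDisjoint (l₁ l₂ : List Pt) : Prop :=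
  ∀ x y : Pt, IsEdgeOf x y l₁ → ¬ IsEdgeOf x y l₂

/-- `p` is a vertex of the boundary of the convex hull of `S`. -/
def HullVertex (S : Finset Pt) (p : Pt) : Prop :=
  p ∈ Set.extremePoints ℝ (convexHull ℝ (S : Set Pt))

/-- `ab` is an edge of the boundary of the convex hull of `S`, i.e. `a` and `b` are
consecutive hull vertices: all other points of `S` lie strictly on one side of line `ab`. -/
def IsHullEdge (S : Finset Pt) (a b : Pt) : Prop :=
  a ∈ S ∧ b ∈ S ∧ a ≠ b ∧
  ((∀ p ∈ S, p ≠ a → p ≠ b → 0 < det3 a b p) ∨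
   (∀ p ∈ S, p ≠ a → p ≠ b → det3 a b p < 0))

/-- The segment `xy` is a bridge over the line through `a` and `b`:
it crosses the line `ℓ(ab)` but not the segment `ab`. -/
def IsBridge (a b x y : Pt) : Prop :=
  det3 a b x * det3 a b y < 0 ∧ segment ℝ x y ∩ segment ℝ a b = ∅

/-- The set of common edges of the two paths is exactly the segment `ab`. -/
def SharesExactly (a b : Pt) (l₁ l₂ : List Pt) : Prop :=
  IsEdgeOf a b l₁ ∧ IsEdgeOf a b l₂ ∧
  ∀ x y : Pt, IsEdgeOf x y l₁ → IsEdgeOf x y l₂ → ({x, y} : Set Pt) = ({a, b} : Set Pt)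

lemma edgeList_nil : edgeList [] = [] := rfl
lemma edgeList_single (p : Pt) : edgeList [p] = [] := rfl
lemma edgeList_cons₂ (p q : Pt) (t : List Pt) :
    edgeList (p :: q :: t) = (p, q) :: edgeList (q :: t) := rfl

lemma edgeList_cons_sub {M : List Pt} {x y : Pt} (p : Pt)
    (h : (x, y) ∈ edgeList M) : (x, y) ∈ edgeList (p :: M) := by
  cases M with
  | nil => simp [edgeList_nil] at h
  | cons q t => rw [edgeList_cons₂]; exact List.mem_cons_of_mem _ h

lemma edge_split {l : List Pt} {x y : Pt} (h : (x, y) ∈ edgeList l) :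
    ∃ L R, l = L ++ x :: y :: R := by
  induction l with
  | nil => simp [edgeList_nil] at h
  | cons p t ih =>
      cases t with
      | nil => simp [edgeList_single] at h
      | cons q t' =>
          rw [edgeList_cons₂] at h
          rcases List.mem_cons.mp h with h | h
          · obtain ⟨h1, h2⟩ := Prod.mk.injEq .. ▸ h
            exact ⟨[], t', by simp [← h1, ← h2]⟩
          · obtain ⟨L, R, hLR⟩ := ih h
            exact ⟨p :: L, R, by simp [hLR]⟩

lemma edge_of_split (L R : List Pt) (x y : Pt) :
    (x, y) ∈ edgeList (L ++ x :: y :: R) := by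
  induction L with
  | nil => rw [List.nil_append, edgeList_cons₂]; exact List.mem_cons_self
  | cons p L' ih => exact edgeList_cons_sub p ih

lemma edge_mem {l : List Pt} {x y : Pt} (h : (x, y) ∈ edgeList l) : x ∈ l ∧ y ∈ l := by
  obtain ⟨L, R, rfl⟩ := edge_split h
  constructor <;> simp

lemma edge_prefix {L : List Pt} (M : List Pt) {x y : Pt} (h : (x, y) ∈ edgeList L) :
    (x, y) ∈ edgeList (L ++ M) := by
  obtain ⟨A, B, rfl⟩ := edge_split h
  have : (A ++ x :: y :: B) ++ M = A ++ x :: y :: (B ++ M) := by simp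
  rw [this]; exact edge_of_split ..

lemma edge_suffix {R : List Pt} (M : List Pt) {x y : Pt} (h : (x, y) ∈ edgeList R) :
    (x, y) ∈ edgeList (M ++ R) := by
  obtain ⟨A, B, rfl⟩ := edge_split h
  have : M ++ (A ++ x :: y :: B) = (M ++ A) ++ x :: y :: B := by simp
  rw [this]; exact edge_of_split ..

lemma allSame (P : Pt → Prop) :
    ∀ (M : List Pt), (∀ p q, (p, q) ∈ edgeList M → (P p ↔ P q)) →
      ∀ x ∈ M, ∀ y ∈ M, (P x ↔ P y) := by
  intro M
  induction M with
  | nil => intro _ x hx; simp at hx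
  | cons p t ih =>
      intro h x hx y hy
      have ht : ∀ p q, (p, q) ∈ edgeList t → (P p ↔ P q) := fun p' q' hp' =>
        h p' q' (edgeList_cons_sub p hp')
      have hpt : ∀ x ∈ t, (P x ↔ P p) := by
        cases t with
        | nil => intro x hx; simp at hx
        | cons q t' =>
            intro x hx
            have h1 : P p ↔ P q := h p q (by rw [edgeList_cons₂]; exact List.mem_cons_self)
            exact (ih ht x hx q List.mem_cons_self).trans h1.symm
      rcases List.mem_cons.mp hx with hx | hx <;> rcases List.mem_cons.mp hy with hy | hy
      · rw [hx, hy]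
      · rw [hx]; exact (hpt y hy).symm
      · rw [hy]; exact hpt x hx
      · exact ih ht x hx y hy

lemma det3_a (a b : Pt) : det3 a b a = 0 := by unfold det3; ring
lemma det3_b (a b : Pt) : det3 a b b = 0 := by unfold det3; ring
lemma det3_swap (a b p : Pt) : det3 b a p = - det3 a b p := by unfold det3; ring
lemma det3_affine (a b x y : Pt) (t : ℝ) :
    det3 a b ((1-t) • x + t • y) = (1-t) * det3 a b x + t * det3 a b y := by
  simp [det3, Prod.fst_add, Prod.snd_add, Prod.smul_fst, Prod.smul_snd, smul_eq_mul]
  ring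

lemma exists_param {a b z : Pt} (hab : a ≠ b) (hz : det3 a b z = 0) :
    ∃ s : ℝ, z = (1 - s) • a + s • b := by
  by_cases h1 : b.1 - a.1 ≠ 0
  · refine ⟨(z.1 - a.1) / (b.1 - a.1), ?_⟩
    have hz' : (b.1 - a.1) * (z.2 - a.2) = (b.2 - a.2) * (z.1 - a.1) := by
      unfold det3 at hz; linarith
    apply Prod.ext <;>
      simp only [Prod.fst_add, Prod.snd_add, Prod.smul_fst, Prod.smul_snd, smul_eq_mul] <;>
      field_simp <;> nlinarith [hz']
  · push_neg at h1
    have hb1 : b.1 = a.1 := by linarith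
    have h2 : b.2 - a.2 ≠ 0 := by
      intro h2
      exact hab (Prod.ext (by linarith) (by linarith))
    refine ⟨(z.2 - a.2) / (b.2 - a.2), ?_⟩
    have hz1 : z.1 = a.1 := by
      unfold det3 at hz
      have h0 : (b.1 - a.1) * (z.2 - a.2) = 0 := by rw [hb1]; ring
      have : (b.2 - a.2) * (z.1 - a.1) = 0 := by linarith
      rcases mul_eq_zero.mp this with h | h
      · exact absurd h h2
      · linarith
    apply Prod.ext <;>
      simp only [Prod.fst_add, Prod.snd_add, Prod.smul_fst, Prod.smul_snd, smul_eq_mul]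
    · rw [hz1, hb1]; ring
    · field_simp; ring


lemma no_cross {S : Finset Pt} {a b : Pt} (hab : a ≠ b)
    (hav : HullVertex S a) (hbv : HullVertex S b)
    {l : List Pt} (hpl : PlanePath S l) (hedge : IsEdgeOf a b l)
    {x y : Pt} (hxy : (x, y) ∈ edgeList l)
    (hsign : det3 a b x * det3 a b y < 0) : False := by
  set dx := det3 a b x with hdx
  set dy := det3 a b y with hdy
  have hx0 : dx ≠ 0 := fun h => by rw [h, zero_mul] at hsign; exact lt_irrefl 0 hsign
  have hy0 : dy ≠ 0 := fun h => by rw [h, mul_zero] at hsign; exact lt_irrefl 0 hsign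
  have hxl : x ∈ l := (edge_mem hxy).1
  have hyl : y ∈ l := (edge_mem hxy).2
  have hxS : x ∈ S := by rw [← hpl.2.1]; simpa using hxl
  have hyS : y ∈ S := by rw [← hpl.2.1]; simpa using hyl
  have hSub : (↑S : Set Pt) ⊆ convexHull ℝ (↑S : Set Pt) := subset_convexHull ℝ _
  have hne : dx - dy ≠ 0 := by
    intro h
    have : dx = dy := by linarith
    rw [this] at hsign
    nlinarith
  set t := dx / (dx - dy) with ht
  have ht01 : 0 ≤ t ∧ t ≤ 1 := by
    rcases mul_neg_iff.mp hsign with ⟨h1, h2⟩ | ⟨h1, h2⟩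
    · have hd : 0 < dx - dy := by linarith
      exact ⟨div_nonneg h1.le hd.le, (div_le_one hd).mpr (by linarith)⟩
    · have hd : 0 < dy - dx := by linarith
      have htt : t = (-dx) / (dy - dx) := by rw [ht, ← neg_div_neg_eq]; ring_nf
      rw [htt]
      exact ⟨div_nonneg (by linarith) hd.le, (div_le_one hd).mpr (by linarith)⟩
  set z := (1 - t) • x + t • y with hzdef
  have hz0 : det3 a b z = 0 := by
    rw [hzdef, det3_affine, ← hdx, ← hdy, ht]
    field_simp
    ring
  have hzxy : z ∈ segment ℝ x y := ⟨1 - t, t, by linarith [ht01.2], ht01.1, by ring, rfl⟩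
  have hzhull : z ∈ convexHull ℝ (↑S : Set Pt) :=
    (convex_convexHull ℝ _).segment_subset (hSub hxS) (hSub hyS) hzxy
  obtain ⟨s, hs⟩ := exists_param hab hz0
  have hahull := (mem_extremePoints.mp hav).1
  have hbhull := (mem_extremePoints.mp hbv).1
  have hs0 : 0 ≤ s := by
    by_contra hlt
    push_neg at hlt
    have h1s : (0:ℝ) < 1 - s := by linarith
    have hopen : a ∈ openSegment ℝ z b := by
      refine ⟨1 / (1 - s), -s / (1 - s), one_div_pos.mpr h1s, div_pos (by linarith) h1s, ?_, ?_⟩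
      · field_simp; ring
      · rw [hs]
        rw [smul_add, smul_smul, smul_smul, add_assoc, ← add_smul]
        have e1 : 1 / (1 - s) * (1 - s) = 1 := by field_simp
        have e2 : 1 / (1 - s) * s + -s / (1 - s) = 0 := by field_simp; ring
        rw [e1, e2, one_smul, zero_smul, add_zero]
    obtain ⟨-, hba⟩ := (mem_extremePoints.mp hav).2 z hzhull b hbhull hopen
    exact hab hba.symm
  have hs1 : s ≤ 1 := by
    by_contra hlt
    push_neg at hlt
    have hspos : (0:ℝ) < s := by linarith
    have hopen : b ∈ openSegment ℝ z a := by
      refine ⟨1 / s, (s - 1) / s, one_div_pos.mpr hspos, div_pos (by linarith) hspos, ?_, ?_⟩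
      · field_simp; ring
      · rw [hs]
        rw [smul_add, smul_smul, smul_smul]
        have e1 : 1 / s * s = 1 := by field_simp
        have e2 : 1 / s * (1 - s) + (s - 1) / s = 0 := by field_simp; ring
        rw [add_right_comm, ← add_smul, e2, e1, one_smul, zero_smul, zero_add]
    obtain ⟨-, hab'⟩ := (mem_extremePoints.mp hbv).2 z hzhull a hahull hopen
    exact hab hab'
  have hzab : z ∈ segment ℝ a b := ⟨1 - s, s, by linarith, hs0, by ring, hs.symm⟩
  have hz_xy_ne : z ≠ x ∧ z ≠ y := by
    constructor <;> intro h <;> rw [h] at hz0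
    · exact hx0 hz0
    · exact hy0 hz0
  have key : ∀ u v : Pt, (u, v) ∈ edgeList l → ({u, v} : Set Pt) = {a, b} → False := by
    intro u v huv hset
    have hne' : (x, y) ≠ (u, v) := by
      intro h
      obtain ⟨h1, h2⟩ := Prod.mk.injEq .. ▸ h
      have : x ∈ ({a, b} : Set Pt) := by rw [← hset, h1]; exact Set.mem_insert _ _
      rcases this with h | h
      · exact hx0 (by rw [hdx, h]; exact det3_a a b)
      · rw [Set.mem_singleton_iff] at h
        exact hx0 (by rw [hdx, h]; exact det3_b a b)
    have hseg : segment ℝ u v = segment ℝ a b := by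
      rcases Set.pair_eq_pair_iff.mp hset with ⟨rfl, rfl⟩ | ⟨rfl, rfl⟩
      · rfl
      · exact segment_symm ℝ _ _
    have := hpl.2.2 (x, y) hxy (u, v) huv hne' ⟨hzxy, by rw [hseg]; exact hzab⟩
    rcases this.1 with h | h
    · exact hz_xy_ne.1 h
    · exact hz_xy_ne.2 h
  rcases hedge with h | h
  · exact key a b h rfl
  · exact key b a h (Set.pair_comm b a)

lemma genpos_det_ne {S : Finset Pt} (hgp : GenPos S) {a b : Pt}
    (ha : a ∈ S) (hb : b ∈ S) (hab : a ≠ b) {p : Pt}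
    (hp : p ∈ S) (hpa : p ≠ a) (hpb : p ≠ b) : det3 a b p ≠ 0 := by
  intro h0
  apply hgp a ha b hb p hp hab hpa.symm hpb.symm
  obtain ⟨s, hs⟩ := exists_param hab h0
  rw [collinear_iff_of_mem (Set.mem_insert a {b, p})]
  refine ⟨b - a, ?_⟩
  intro q hq
  rcases hq with rfl | rfl | rfl
  · exact ⟨0, by simp⟩
  · exact ⟨1, by simp⟩
  · refine ⟨s, ?_⟩
    rw [hs]
    apply Prod.ext <;>
      simp [Prod.fst_add, Prod.snd_add, Prod.smul_fst, Prod.smul_snd, smul_eq_mul,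
        Prod.fst_sub, Prod.snd_sub] <;> ring

lemma sign_iff {dp dq : ℝ} (hp : dp ≠ 0) (hq : dq ≠ 0) (h : ¬ dp * dq < 0) :
    (0 < dp ↔ 0 < dq) := by
  rcases hp.lt_or_gt with h1 | h1 <;> rcases hq.lt_or_gt with h2 | h2 <;>
    constructor <;> intro h3 <;> first | assumption | linarith | nlinarith

lemma key {S : Finset Pt} (hgp : GenPos S) {a b : Pt}
    (ha : a ∈ S) (hb : b ∈ S) (hab : a ≠ b)
    (hav : HullVertex S a) (hbv : HullVertex S b)
    {l : List Pt} (hpl : PlanePath S l) (hedge : IsEdgeOf a b l)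
    (h2 : (S.filter (fun p => 0 < det3 a b p)).card = 2)
    (h1 : 1 ≤ (S.filter (fun p => det3 a b p < 0)).card) :
    ∃ c d : Pt, (S.filter (fun p => 0 < det3 a b p)) = {c, d} ∧ c ≠ d ∧ IsEdgeOf c d l := by
  -- split l around the edge ab
  obtain ⟨u, v, huv, L, R, hl⟩ :
      ∃ u v, ((u = a ∧ v = b) ∨ (u = b ∧ v = a)) ∧ ∃ L R, l = L ++ u :: v :: R := by
    rcases hedge with h | h
    · exact ⟨a, b, Or.inl ⟨rfl, rfl⟩, edge_split h⟩
    · exact ⟨b, a, Or.inr ⟨rfl, rfl⟩, edge_split h⟩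
  have hnd : l.Nodup := hpl.1
  have hndL : L.Nodup := by
    rw [hl] at hnd; exact (List.nodup_append.mp hnd).1
  have hmemS : ∀ p, p ∈ l ↔ p ∈ S := by
    intro p; rw [← hpl.2.1]; simp
  have hab_mem : ∀ p, p ≠ a → p ≠ b → (p ≠ u ∧ p ≠ v) := by
    intro p h1' h2'
    rcases huv with ⟨rfl, rfl⟩ | ⟨rfl, rfl⟩ <;> exact ⟨by assumption, by assumption⟩
  have hLR_ab : ∀ p, p ∈ L ∨ p ∈ R → p ≠ a ∧ p ≠ b := by
    rw [hl] at hnd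
    intro p hp
    have hup : u ∉ L ∧ u ∉ R ∧ v ∉ L ∧ v ∉ R := by
      rw [List.nodup_append] at hnd
      obtain ⟨-, hvnd, h3⟩ := hnd
      simp only [List.nodup_cons] at hvnd
      exact ⟨fun hu => h3 u hu u List.mem_cons_self rfl,
        fun huR => hvnd.1 (List.mem_cons_of_mem _ huR),
        fun hv => h3 v hv v (List.mem_cons_of_mem _ List.mem_cons_self) rfl,
        fun hvR => hvnd.2.1 hvR⟩
    have hpu : p ≠ u := by
      rintro rfl
      rcases hp with h | h
      · exact hup.1 h
      · exact hup.2.1 h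
    have hpv : p ≠ v := by
      rintro rfl
      rcases hp with h | h
      · exact hup.2.2.1 h
      · exact hup.2.2.2 h
    rcases huv with ⟨rfl, rfl⟩ | ⟨rfl, rfl⟩
    · exact ⟨hpu, hpv⟩
    · exact ⟨hpv, hpu⟩
  have hmemLR : ∀ p, (p ∈ L ∨ p ∈ R) ↔ (p ∈ S ∧ p ≠ a ∧ p ≠ b) := by
    intro p
    constructor
    · intro hp
      refine ⟨?_, hLR_ab p hp⟩
      rw [← hmemS, hl]
      rcases hp with h | h
      · simp [h]
      · simp [h]
    · rintro ⟨hpS, hpa, hpb⟩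
      have : p ∈ l := (hmemS p).mpr hpS
      rw [hl] at this
      simp only [List.mem_append, List.mem_cons] at this
      obtain ⟨hu, hv⟩ := hab_mem p hpa hpb
      rcases this with h | h | h | h
      · exact Or.inl h
      · exact absurd h hu
      · exact absurd h hv
      · exact Or.inr h
  have hdetne : ∀ p, p ∈ L ∨ p ∈ R → det3 a b p ≠ 0 := by
    intro p hp
    obtain ⟨hpS, hpa, hpb⟩ := (hmemLR p).mp hp
    exact genpos_det_ne hgp ha hb hab hpS hpa hpb
  -- sign constancy on L and on R
  have hedgeL : ∀ p q : Pt, (p, q) ∈ edgeList L → (p, q) ∈ edgeList l := by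
    intro p q h; rw [hl]
    have : L ++ u :: v :: R = L ++ (u :: v :: R) := rfl
    rw [this]; exact edge_prefix _ h
  have hedgeR : ∀ p q : Pt, (p, q) ∈ edgeList R → (p, q) ∈ edgeList l := by
    intro p q h; rw [hl]
    have : L ++ u :: v :: R = (L ++ [u, v]) ++ R := by simp
    rw [this]; exact edge_suffix _ h
  have hsameL : ∀ p ∈ L, ∀ q ∈ L, (0 < det3 a b p ↔ 0 < det3 a b q) := by
    apply allSame
    intro p q hpq
    have hp := (edge_mem (l := L) hpq).1
    have hq := (edge_mem (l := L) hpq).2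
    exact sign_iff (hdetne p (Or.inl hp)) (hdetne q (Or.inl hq))
      (fun hc => no_cross hab hav hbv hpl hedge (hedgeL p q hpq) hc)
  have hsameR : ∀ p ∈ R, ∀ q ∈ R, (0 < det3 a b p ↔ 0 < det3 a b q) := by
    apply allSame
    intro p q hpq
    have hp := (edge_mem (l := R) hpq).1
    have hq := (edge_mem (l := R) hpq).2
    exact sign_iff (hdetne p (Or.inr hp)) (hdetne q (Or.inr hq))
      (fun hc => no_cross hab hav hbv hpl hedge (hedgeR p q hpq) hc)
  -- pick a positive and a negative point
  have hPosne : (S.filter (fun p => 0 < det3 a b p)).Nonempty := by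
    rw [← Finset.card_pos, h2]; norm_num
  obtain ⟨c0, hc0⟩ := hPosne
  obtain ⟨e, he⟩ := Finset.card_pos.mp (lt_of_lt_of_le zero_lt_one h1)
  rw [Finset.mem_filter] at hc0 he
  have hc0LR : c0 ∈ L ∨ c0 ∈ R := by
    rw [hmemLR]
    refine ⟨hc0.1, ?_, ?_⟩
    · rintro rfl; rw [det3_a] at hc0; exact lt_irrefl 0 hc0.2
    · rintro rfl; rw [det3_b] at hc0; exact lt_irrefl 0 hc0.2
  have heLR : e ∈ L ∨ e ∈ R := by
    rw [hmemLR]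
    refine ⟨he.1, ?_, ?_⟩
    · rintro rfl; rw [det3_a] at he; exact lt_irrefl 0 he.2
    · rintro rfl; rw [det3_b] at he; exact lt_irrefl 0 he.2
  -- main case split
  rcases hc0LR with hc0L | hc0R
  · -- L is the positive side
    have hLpos : ∀ p ∈ L, 0 < det3 a b p := fun p hp =>
      (hsameL p hp c0 hc0L).mpr hc0.2
    have heR : e ∈ R := by
      rcases heLR with h | h
      · exact absurd (hLpos e h) (by linarith [he.2])
      · exact h
    have hLfin : L.toFinset = S.filter (fun p => 0 < det3 a b p) := by
      ext p
      simp only [List.mem_toFinset, Finset.mem_filter]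
      constructor
      · intro hp
        exact ⟨((hmemLR p).mp (Or.inl hp)).1, hLpos p hp⟩
      · rintro ⟨hpS, hppos⟩
        have : p ∈ L ∨ p ∈ R := by
          rw [hmemLR]
          refine ⟨hpS, ?_, ?_⟩
          · rintro rfl; rw [det3_a] at hppos; exact lt_irrefl 0 hppos
          · rintro rfl; rw [det3_b] at hppos; exact lt_irrefl 0 hppos
        rcases this with h | h
        · exact h
        · exact absurd hppos (by have := (hsameR p h e heR).mp; intro hc; linarith [this hc, he.2])
    have hlen : L.length = 2 := by
      rw [← List.toFinset_card_of_nodup hndL, hLfin, h2]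
    obtain ⟨c, d, rfl⟩ := List.length_eq_two.mp hlen
    have hcd : c ≠ d := by simpa using hndL
    refine ⟨c, d, ?_, hcd, Or.inl ?_⟩
    · rw [← hLfin]; simp
    · rw [hl]
      exact edge_of_split [] (u :: v :: R) c d
  · -- R is the positive side
    have hRpos : ∀ p ∈ R, 0 < det3 a b p := fun p hp =>
      (hsameR p hp c0 hc0R).mpr hc0.2
    have heL : e ∈ L := by
      rcases heLR with h | h
      · exact h
      · exact absurd (hRpos e h) (by linarith [he.2])
    have hndR : R.Nodup := by
      rw [hl] at hnd
      have := (List.nodup_append.mp hnd).2.1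
      simp only [List.nodup_cons] at this
      exact this.2.2
    have hRfin : R.toFinset = S.filter (fun p => 0 < det3 a b p) := by
      ext p
      simp only [List.mem_toFinset, Finset.mem_filter]
      constructor
      · intro hp
        exact ⟨((hmemLR p).mp (Or.inr hp)).1, hRpos p hp⟩
      · rintro ⟨hpS, hppos⟩
        have : p ∈ L ∨ p ∈ R := by
          rw [hmemLR]
          refine ⟨hpS, ?_, ?_⟩
          · rintro rfl; rw [det3_a] at hppos; exact lt_irrefl 0 hppos
          · rintro rfl; rw [det3_b] at hppos; exact lt_irrefl 0 hppos
        rcases this with h | h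
        · exact absurd hppos (by have := (hsameL p h e heL).mp; intro hc; linarith [this hc, he.2])
        · exact h
    have hlen : R.length = 2 := by
      rw [← List.toFinset_card_of_nodup hndR, hRfin, h2]
    obtain ⟨c, d, rfl⟩ := List.length_eq_two.mp hlen
    have hcd : c ≠ d := by simpa using hndR
    refine ⟨c, d, ?_, hcd, Or.inl ?_⟩
    · rw [← hRfin]; simp
    · rw [hl]
      have : L ++ u :: v :: [c, d] = (L ++ [u, v]) ++ c :: d :: [] := by simp
      rw [this]
      exact edge_of_split _ _ c d

lemma main_case {S : Finset Pt} (hgp : GenPos S) {a b : Pt}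
    (ha : a ∈ S) (hb : b ∈ S) (hab : a ≠ b)
    (hav : HullVertex S a) (hbv : HullVertex S b)
    (h2 : (S.filter (fun p => 0 < det3 a b p)).card = 2)
    (h1 : 1 ≤ (S.filter (fun p => det3 a b p < 0)).card) :
    ¬ ∃ l₁ l₂ : List Pt, PlanePath S l₁ ∧ PlanePath S l₂ ∧ SharesExactly a b l₁ l₂ := by
  rintro ⟨l₁, l₂, hp1, hp2, hsh⟩
  obtain ⟨c, d, hPos, hcd, he1⟩ := key hgp ha hb hab hav hbv hp1 hsh.1 h2 h1
  obtain ⟨c', d', hPos', hcd', he2⟩ := key hgp ha hb hab hav hbv hp2 hsh.2.1 h2 h1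
  have hpair : ({c, d} : Finset Pt) = {c', d'} := by rw [← hPos, hPos']
  have hc : c = c' ∨ c = d' := by
    have : c ∈ ({c', d'} : Finset Pt) := hpair ▸ Finset.mem_insert_self c {d}
    simpa using this
  have hd : d = c' ∨ d = d' := by
    have : d ∈ ({c', d'} : Finset Pt) := hpair ▸ (by simp)
    simpa using this
  have he2' : IsEdgeOf c d l₂ := by
    rcases hc with h | h
    · have hd' : d = d' := by
        rcases hd with h2' | h2'
        · exact absurd (h2'.trans h.symm) hcd.symm
        · exact h2'
      rw [h, hd']; exact he2
    · have hd' : d = c' := by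
        rcases hd with h2' | h2'
        · exact h2'
        · exact absurd (h.trans h2'.symm) hcd
      rw [h, hd']; exact he2.symm
  have hset := hsh.2.2 c d he1 he2'
  have hcab : c ∈ ({a, b} : Set Pt) := by rw [← hset]; exact Set.mem_insert _ _
  have hcPos : c ∈ S.filter (fun p => 0 < det3 a b p) := hPos ▸ Finset.mem_insert_self c {d}
  have hcpos : 0 < det3 a b c := (Finset.mem_filter.mp hcPos).2
  rcases hcab with h | h
  · rw [h, det3_a] at hcpos; exact lt_irrefl 0 hcpos
  · rw [Set.mem_singleton_iff] at h
    rw [h, det3_b] at hcpos; exact lt_irrefl 0 hcpos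

/-- If `a, b` are hull vertices such that one open halfplane of `ℓ(ab)`
contains exactly 2 points of `S` and the other at least 1, then no two plane Hamiltonian
paths on `S` share exactly the edge `ab`. -/
theorem stmt_9 (S : Finset Pt) (hgp : GenPos S)
    (a b : Pt) (ha : a ∈ S) (hb : b ∈ S) (hab : a ≠ b)
    (hav : HullVertex S a) (hbv : HullVertex S b)
    (hcount :
      ((S.filter (fun p => 0 < det3 a b p)).card = 2 ∧
        1 ≤ (S.filter (fun p => det3 a b p < 0)).card) ∨
      ((S.filter (fun p => det3 a b p < 0)).card = 2 ∧
        1 ≤ (S.filter (fun p => 0 < det3 a b p)).card)) :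
    ¬ ∃ l₁ l₂ : List Pt, PlanePath S l₁ ∧ PlanePath S l₂ ∧ SharesExactly a b l₁ l₂ := by
  rcases hcount with ⟨h2, h1⟩ | ⟨h2, h1⟩
  · exact main_case hgp ha hb hab hav hbv h2 h1
  · have e1 : S.filter (fun p => 0 < det3 b a p) = S.filter (fun p => det3 a b p < 0) := by
      apply Finset.filter_congr
      intro p _
      rw [det3_swap]
      simp [neg_pos]
    have e2 : S.filter (fun p => det3 b a p < 0) = S.filter (fun p => 0 < det3 a b p) := by
      apply Finset.filter_congr
      intro p _
      rw [det3_swap]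
      simp
    have hmain := main_case hgp hb ha hab.symm hbv hav (by rw [e1]; exact h2) (by rw [e2]; exact h1)
    rintro ⟨l₁, l₂, hp1, hp2, hsh⟩
    exact hmain ⟨l₁, l₂, hp1, hp2, hsh.1.symm, hsh.2.1.symm,
      fun x y hx hy => (hsh.2.2 x y hx hy).trans (Set.pair_comm a b)⟩
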